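/- arXiv:0906.1702 — 3 statements merged into one kernel-verified Lean document; each statement's English description precedes it below -/
import Mathlib

section
/- For a {0,1} matrix A of size n×n, if M is the random matrix with M_{ij} = ρ_{ij} A_{ij} where the ρ_{ij} are independent uniform random variables on {+1, −1}, then the expectation of (det M)^2 equals the permanent of A. -/
open Finset

noncomputable def s (b : Bool) : ℝ := if b then 1 else -1

lemma s_sq (b : Bool) : s b * s b = 1 := by cases b <;> simp [s]

lemma gg_inner_sum (n : ℕ) (a b : Fin n) :
    ∑ v : Fin n → Bool, s (v a) * s (v b) = if a = b then (2:ℝ) ^ n else 0 := by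
  rcases eq_or_ne a b with rfl | hab
  · simp only [if_pos rfl, s_sq]
    simp [Finset.card_univ]
  · rw [if_neg hab]
    set F : (Fin n → Bool) → ℝ := fun v => s (v a) * s (v b) with hF
    have hinv : Function.Involutive (fun v : Fin n → Bool => Function.update v a (! v a)) := by
      intro v
      funext j
      rcases eq_or_ne j a with rfl | hj
      · simp
      · simp [Function.update_of_ne hj]
    set e := hinv.toPerm with he
    have h1 : ∑ v, F (e v) = ∑ v, F v := Equiv.sum_comp e F
    have h2 : ∀ v, F (e v) = - F v := by
      intro v
      have ha' : (e v) a = ! v a := by simp [he, Function.Involutive.toPerm]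
      have hb' : (e v) b = v b := by
        simp [he, Function.Involutive.toPerm, Function.update_of_ne (Ne.symm hab)]
      have hs : s (! v a) = - s (v a) := by cases v a <;> simp [s]
      simp only [hF, ha', hb', hs]
      ring
    simp only [h2, Finset.sum_neg_distrib] at h1
    linarith

lemma gg_eps_sum (n : ℕ) (π σ : Equiv.Perm (Fin n)) :
    ∑ ε : Fin n → Fin n → Bool, ∏ i, s (ε i (π i)) * s (ε i (σ i))
      = if π = σ then (2:ℝ) ^ (n * n) else 0 := by
  classical
  have := (Fintype.prod_sum (ι := Fin n)
    (κ := fun _ => Fin n → Bool) (fun i v => s (v (π i)) * s (v (σ i)))).symm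
  rw [this]
  have h1 : ∀ i : Fin n, (∑ v : Fin n → Bool, s (v (π i)) * s (v (σ i)))
      = if π i = σ i then (2:ℝ) ^ n else 0 := fun i => gg_inner_sum n (π i) (σ i)
  simp only [h1]
  rcases eq_or_ne π σ with rfl | hps
  · simp [pow_mul, Finset.prod_const, Finset.card_univ]
  · obtain ⟨i, hi⟩ : ∃ i, π i ≠ σ i := by
      by_contra h
      push_neg at h
      exact hps (Equiv.ext h)
    rw [if_neg hps]
    exact Finset.prod_eq_zero (Finset.mem_univ i) (if_neg hi)

noncomputable def permanent {n : ℕ} (A : Matrix (Fin n) (Fin n) ℝ) : ℝ :=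
  ∑ π : Equiv.Perm (Fin n), ∏ i, A i (π i)

/-- Godsil–Gutman: for a `{0,1}` matrix `A`, if `M i j = ρ i j * A i j` with the
`ρ i j` independent uniform signs `±1`, then `E[(det M)^2] = perm A`.  The expectation
over the i.i.d. uniform signs is written as the average over all sign assignments. -/
theorem godsil_gutman (n : ℕ) (A : Matrix (Fin n) (Fin n) ℝ)
    (hA : ∀ i j, A i j = 0 ∨ A i j = 1) :
    (1 / 2 ^ (n * n) : ℝ) *
      ∑ ε : Fin n → Fin n → Bool,
        (Matrix.det (Matrix.of fun i j => (if ε i j then (1 : ℝ) else -1) * A i j)) ^ 2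
    = permanent A := by
  classical
  set c : Equiv.Perm (Fin n) → ℝ := fun π => ((Equiv.Perm.sign π : ℤ) : ℝ) with hc
  have hdet : ∀ ε : Fin n → Fin n → Bool,
      Matrix.det (Matrix.of fun i j => (if ε i j then (1:ℝ) else -1) * A i j)
      = ∑ π : Equiv.Perm (Fin n), c π * ∏ i, s (ε i (π i)) * A i (π i) := by
    intro ε
    rw [← Matrix.det_transpose, Matrix.det_apply']
    apply Finset.sum_congr rfl
    intro π _
    simp [s, Matrix.transpose_apply, hc]
  have hsq : ∀ ε : Fin n → Fin n → Bool,
      (Matrix.det (Matrix.of fun i j => (if ε i j then (1:ℝ) else -1) * A i j)) ^ 2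
      = ∑ π : Equiv.Perm (Fin n), ∑ σ : Equiv.Perm (Fin n),
          (c π * c σ) * ((∏ i, A i (π i) * A i (σ i)) * ∏ i, s (ε i (π i)) * s (ε i (σ i))) := by
    intro ε
    rw [hdet, sq, Finset.sum_mul_sum]
    apply Finset.sum_congr rfl; intro π _
    apply Finset.sum_congr rfl; intro σ _
    have hpq : (∏ i, s (ε i (π i)) * A i (π i)) * (∏ i, s (ε i (σ i)) * A i (σ i))
        = (∏ i, A i (π i) * A i (σ i)) * ∏ i, s (ε i (π i)) * s (ε i (σ i)) := by
      rw [← Finset.prod_mul_distrib, ← Finset.prod_mul_distrib]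
      exact Finset.prod_congr rfl fun i _ => by ring
    rw [mul_mul_mul_comm, hpq]
  calc (1 / 2 ^ (n * n) : ℝ) *
      ∑ ε : Fin n → Fin n → Bool,
        (Matrix.det (Matrix.of fun i j => (if ε i j then (1 : ℝ) else -1) * A i j)) ^ 2
      = (1 / 2 ^ (n * n) : ℝ) * ∑ π : Equiv.Perm (Fin n), ∑ σ : Equiv.Perm (Fin n),
          (c π * c σ) * ((∏ i, A i (π i) * A i (σ i)) *
            ∑ ε : Fin n → Fin n → Bool, ∏ i, s (ε i (π i)) * s (ε i (σ i))) := by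
        rw [Finset.sum_congr rfl fun ε _ => hsq ε, Finset.sum_comm]
        congr 1
        apply Finset.sum_congr rfl; intro π _
        rw [Finset.sum_comm]
        apply Finset.sum_congr rfl; intro σ _
        rw [← Finset.mul_sum, ← Finset.mul_sum]
    _ = permanent A := by
        simp only [gg_eps_sum]
        rw [Finset.mul_sum]
        unfold permanent
        apply Finset.sum_congr rfl
        intro π _
        rw [Finset.sum_eq_single π]
        · have hc2 : c π * c π = 1 := by
            rcases Int.units_eq_one_or (Equiv.Perm.sign π) with h | h <;>
              · simp only [hc, h]; norm_num
          have hAsq : ∀ i, A i (π i) * A i (π i) = A i (π i) := by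
            intro i; rcases hA i (π i) with h | h <;> rw [h] <;> ring
          simp only [if_pos rfl, if_true, Finset.prod_congr rfl fun i _ => hAsq i, hc2]
          have h2 : (2:ℝ) ^ (n*n) ≠ 0 := by positivity
          field_simp
        · intro σ _ hσ
          rw [if_neg (Ne.symm hσ)]
          ring
        · intro h; exact absurd (Finset.mem_univ π) h
end

section
/- Suppose permutations κ, λ, μ, ν ∈ S_n satisfy the following: for each i there is a partition of {κ, λ} and {μ, ν} into matched pairs such that for all i, j the number of σ ∈ {κ, λ} with σ(i)=j equals the number of σ ∈ {μ, ν} with σ(i)=j. Then sgn(κ)·sgn(λ)·sgn(μ)·sgn(ν) = 1. -/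
open Equiv Sum

private def flipOn {n : ℕ} (T : Finset (Fin n)) : Equiv.Perm (Fin n ⊕ Fin n) :=
  Function.Involutive.toPerm
    (fun x => match x with
      | inl i => if i ∈ T then inr i else inl i
      | inr i => if i ∈ T then inl i else inr i)
    (by intro x; rcases x with i | i <;> by_cases hi : i ∈ T <;> simp [hi])

private lemma flipOn_inl {n : ℕ} (T : Finset (Fin n)) (i : Fin n) :
    flipOn T (inl i) = if i ∈ T then inr i else inl i := rfl

private lemma flipOn_inr {n : ℕ} (T : Finset (Fin n)) (i : Fin n) :
    flipOn T (inr i) = if i ∈ T then inl i else inr i := rfl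

private lemma flipOn_insert {n : ℕ} (T : Finset (Fin n)) (a : Fin n) (ha : a ∉ T) :
    flipOn (insert a T) = Equiv.swap (inl a) (inr a) * flipOn T := by
  ext x
  rcases x with i | i <;>
    by_cases hi : i ∈ T <;> by_cases hia : i = a <;>
      simp_all [flipOn_inl, flipOn_inr, Equiv.swap_apply_def, Equiv.Perm.mul_apply]

private lemma sign_flipOn {n : ℕ} (T : Finset (Fin n)) :
    Equiv.Perm.sign (flipOn T) = (-1) ^ T.card := by
  induction T using Finset.induction with
  | empty =>
      have : flipOn (∅ : Finset (Fin n)) = 1 := by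
        ext x; rcases x with i | i <;> simp [flipOn_inl, flipOn_inr]
      simp [this]
  | @insert a T ha ih =>
      rw [flipOn_insert T a ha, map_mul, ih, Finset.card_insert_of_notMem ha,
        Equiv.Perm.sign_swap (by simp)]
      rw [pow_add, pow_one]
      exact mul_comm _ _

/-- If the multiset of pairs `{(i, κ i)} ∪ {(i, lam i)}` equals the multiset
`{(i, μ i)} ∪ {(i, ν i)}`, then `sgn κ · sgn lam · sgn μ · sgn ν = 1`. -/
theorem double_cycle_cover_sign (n : ℕ) (κ lam μ ν : Equiv.Perm (Fin n))
    (h : ∀ i j : Fin n,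
      ((if κ i = j then 1 else 0) + (if lam i = j then 1 else 0) : ℕ)
        = (if μ i = j then 1 else 0) + (if ν i = j then 1 else 0)) :
    Equiv.Perm.sign κ * Equiv.Perm.sign lam * Equiv.Perm.sign μ * Equiv.Perm.sign ν
      = 1 := by
  -- dichotomy
  have D : ∀ i, (μ i = κ i ∧ ν i = lam i) ∨ (μ i = lam i ∧ ν i = κ i) := by
    intro i
    have hμ : μ i = κ i ∨ μ i = lam i := by
      have := h i (μ i)
      by_cases h1 : κ i = μ i
      · exact Or.inl h1.symm
      by_cases h2 : lam i = μ i
      · exact Or.inr h2.symm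
      simp [h1, h2] at this
      omega
    have hν : ν i = κ i ∨ ν i = lam i := by
      have := h i (ν i)
      by_cases h1 : κ i = ν i
      · exact Or.inl h1.symm
      by_cases h2 : lam i = ν i
      · exact Or.inr h2.symm
      simp [h1, h2] at this
    rcases hμ with hμ | hμ
    · rcases hν with hν | hν
      · -- μ i = κ i, ν i = κ i : show lam i = κ i
        left
        refine ⟨hμ, ?_⟩
        have := h i (κ i)
        by_cases h2 : lam i = κ i
        · rw [hν, ← h2]
        · simp [h2, hμ, hν] at this
      · exact Or.inl ⟨hμ, hν⟩
    · rcases hν with hν | hν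
      · exact Or.inr ⟨hμ, hν⟩
      · -- μ i = lam i, ν i = lam i : show κ i = lam i
        right
        refine ⟨hμ, ?_⟩
        have := h i (lam i)
        by_cases h2 : κ i = lam i
        · rw [hν, ← h2]
        · simp [h2, hμ, hν] at this
  classical
  set T : Finset (Fin n) := Finset.univ.filter (fun i => μ i ≠ κ i) with hT
  have hmemT : ∀ i, i ∈ T ↔ μ i ≠ κ i := by intro i; simp [hT]
  have hTfacts : ∀ i ∈ T, μ i = lam i ∧ ν i = κ i := by
    intro i hi
    rcases D i with ⟨h1, _⟩ | hd
    · exact absurd h1 ((hmemT i).mp hi)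
    · exact hd
  have hTfacts' : ∀ i, i ∉ T → μ i = κ i ∧ ν i = lam i := by
    intro i hi
    rcases D i with hd | ⟨h1, h2⟩
    · exact hd
    · exact ⟨by_contra fun hc => hi ((hmemT i).mpr hc), by
        rcases D i with ⟨_, h3⟩ | _
        · exact h3
        · have hμκ : μ i = κ i := by_contra fun hc => hi ((hmemT i).mpr hc)
          rw [h2, ← hμκ, h1]⟩
  set S : Finset (Fin n) := T.image κ with hS
  have hκS : ∀ i, κ i ∈ S ↔ i ∈ T := by
    intro i
    simp [hS, Finset.mem_image, κ.injective.eq_iff]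
  have hlS : ∀ i, lam i ∈ S ↔ i ∈ T := by
    intro i
    constructor
    · intro hi
      rcases Finset.mem_image.mp hi with ⟨x, hx, hxe⟩
      -- κ x = lam i, x ∈ T
      by_contra hiT
      have h1 := hTfacts x hx
      have h2 := hTfacts' i hiT
      -- ν x = κ x = lam i = ν i ⇒ x = i ⇒ κ i = lam i, μ i = κ i = lam i = μ x
      have : ν x = ν i := by rw [h1.2, hxe, ← h2.2]
      have hxi : x = i := ν.injective this
      subst hxi
      exact (hmemT x).mp hx (by rw [h2.1])
    · intro hi
      -- i ∈ T; show lam i ∈ κ(T), i.e. x := κ⁻¹ (lam i) ∈ T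
      have h1 := hTfacts i hi
      set x := κ⁻¹ (lam i) with hx
      have hκx : κ x = lam i := by simp [hx]
      refine Finset.mem_image.mpr ⟨x, ?_, hκx⟩
      by_contra hxT
      have h2 := hTfacts' x hxT
      -- ν x = lam x, μ x = κ x = lam i = μ i ⇒ x = i ⇒ κ i = lam i contradiction
      have : μ x = μ i := by rw [h2.1, hκx, ← h1.1]
      have hxi : x = i := μ.injective this
      rw [hxi] at hκx
      exact (hmemT i).mp hi (by rw [h1.1, ← hκx])
  have key : Equiv.sumCongr (μ : Equiv.Perm (Fin n)) ν
      = flipOn S * Equiv.sumCongr (κ : Equiv.Perm (Fin n)) lam * flipOn T := by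
    ext x
    rcases x with i | i <;> by_cases hi : i ∈ T
    · have h1 := hTfacts i hi
      simp [Equiv.Perm.mul_apply, flipOn_inl, flipOn_inr, hi, (hlS i).mpr hi, h1.1]
    · have h1 := hTfacts' i hi
      have h2 : κ i ∉ S := fun hc => hi ((hκS i).mp hc)
      simp [Equiv.Perm.mul_apply, flipOn_inl, flipOn_inr, hi, h2, h1.1]
    · have h1 := hTfacts i hi
      simp [Equiv.Perm.mul_apply, flipOn_inl, flipOn_inr, hi, (hκS i).mpr hi, h1.2]
    · have h1 := hTfacts' i hi
      have h2 : lam i ∉ S := fun hc => hi ((hlS i).mp hc)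
      simp [Equiv.Perm.mul_apply, flipOn_inl, flipOn_inr, hi, h2, h1.2]
  have hsign := congrArg Equiv.Perm.sign key
  rw [Equiv.Perm.sign_sumCongr, map_mul, map_mul, Equiv.Perm.sign_sumCongr,
    sign_flipOn, sign_flipOn] at hsign
  have hcard : S.card = T.card := Finset.card_image_of_injective T κ.injective
  rw [hcard] at hsign
  have hmain : Equiv.Perm.sign μ * Equiv.Perm.sign ν
      = Equiv.Perm.sign κ * Equiv.Perm.sign lam := by
    rw [hsign, mul_comm ((-1 : ℤˣ) ^ T.card), mul_assoc, Int.units_mul_self, mul_one]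
  calc Equiv.Perm.sign κ * Equiv.Perm.sign lam * Equiv.Perm.sign μ * Equiv.Perm.sign ν
      = (Equiv.Perm.sign κ * Equiv.Perm.sign lam)
          * (Equiv.Perm.sign μ * Equiv.Perm.sign ν) := by rw [mul_assoc]
    _ = (Equiv.Perm.sign κ * Equiv.Perm.sign lam)
          * (Equiv.Perm.sign κ * Equiv.Perm.sign lam) := by rw [hmain]
    _ = 1 := Int.units_mul_self _
end

section
/- For an n×n matrix A with entries in {0,1}, (perm A)² = Σ_{C ⊢ A} 2^{t(C)}, where the sum is over double cycle covers C of the bipartite graph of A and t(C) is the number of cycles (of length > 2) in C. -/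
open Finset
open scoped Classical

/-- `C` is a double cycle cover of the `{0,1}` matrix `A`: multiplicities in
`{0,2,4}`, supported on the edges of `A`, and every vertex of the bipartite graph
has total degree `4`. -/
def IsDoubleCycleCover {n : ℕ} (A : Matrix (Fin n) (Fin n) ℝ)
    (C : Fin n → Fin n → Fin 5) : Prop :=
  (∀ i j, (C i j : ℕ) = 0 ∨ (C i j : ℕ) = 2 ∨ (C i j : ℕ) = 4) ∧
  (∀ i j, A i j = 0 → (C i j : ℕ) = 0) ∧
  (∀ i, ∑ j, (C i j : ℕ) = 4) ∧ (∀ j, ∑ i, (C i j : ℕ) = 4)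

/-- The bipartite (simple) graph on `Fin n ⊕ Fin n` whose edges are the doubly
covered edges of `C`, i.e. those with multiplicity `2`. -/
def coverGraph {n : ℕ} (C : Fin n → Fin n → Fin 5) : SimpleGraph (Fin n ⊕ Fin n) :=
  SimpleGraph.fromRel fun u v =>
    ∃ i j, u = Sum.inl i ∧ v = Sum.inr j ∧ (C i j : ℕ) = 2

/-- `t(C)`: the number of cycles of length `> 2` in the double cycle cover `C`,
i.e. the number of connected components of the graph of doubly covered edges that
actually contain such an edge. -/
noncomputable def numCycles {n : ℕ} (C : Fin n → Fin n → Fin 5) : ℕ :=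
  Nat.card {comp : (coverGraph C).ConnectedComponent //
    ∃ i, (∃ j, (C i j : ℕ) = 2) ∧
      (coverGraph C).connectedComponentMk (Sum.inl i) = comp}

namespace PermSqAux

set_option linter.unusedVariables false

variable {n : ℕ}

/-- `C` is the superposition of the two permutation matrices of `π` and `σ`. -/
def Agrees (C : Fin n → Fin n → Fin 5) (π σ : Equiv.Perm (Fin n)) : Prop :=
  ∀ i j, (C i j : ℕ) = (if π i = j then 2 else 0) + (if σ i = j then 2 else 0)

lemma pair_le {f : Fin n → ℕ} {a b : Fin n} (hab : a ≠ b) (h : ∑ i, f i = 4) :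
    f a + f b ≤ 4 := by
  have h2 : ∑ i ∈ ({a, b} : Finset (Fin n)), f i ≤ ∑ i, f i :=
    Finset.sum_le_sum_of_subset (Finset.subset_univ _)
  rw [h, Finset.sum_insert (by simp [hab]), Finset.sum_singleton] at h2
  omega

lemma trip_le {f : Fin n → ℕ} {a b c : Fin n} (hab : a ≠ b) (hac : a ≠ c) (hbc : b ≠ c)
    (h : ∑ i, f i = 4) : f a + f b + f c ≤ 4 := by
  have h2 : ∑ i ∈ ({a, b, c} : Finset (Fin n)), f i ≤ ∑ i, f i :=
    Finset.sum_le_sum_of_subset (Finset.subset_univ _)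
  rw [h, Finset.sum_insert (by simp [hab, hac]), Finset.sum_insert (by simp [hbc]),
    Finset.sum_singleton] at h2
  omega

namespace Agrees

variable {C : Fin n → Fin n → Fin 5} {π σ π₀ σ₀ : Equiv.Perm (Fin n)}

lemma symm (h : Agrees C π σ) : Agrees C σ π := fun i j => by rw [h i j, Nat.add_comm]

lemma rowSum (h : Agrees C π σ) (i : Fin n) : ∑ j, (C i j : ℕ) = 4 := by
  simp only [h i]
  rw [Finset.sum_add_distrib, Finset.sum_ite_eq, Finset.sum_ite_eq]
  simp

lemma colSum (h : Agrees C π σ) (j : Fin n) : ∑ i, (C i j : ℕ) = 4 := by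
  simp only [fun i => h i j]
  rw [Finset.sum_add_distrib]
  have h1 : ∀ τ : Equiv.Perm (Fin n), ∑ i, (if τ i = j then (2:ℕ) else 0) = 2 := by
    intro τ
    calc ∑ i, (if τ i = j then (2:ℕ) else 0)
        = ∑ i, (if i = j then (2:ℕ) else 0) := Equiv.sum_comp τ fun x => if x = j then 2 else 0
      _ = 2 := by simp
  rw [h1, h1]

lemma ne_iff (h : Agrees C π σ) (i : Fin n) : (∃ j, (C i j : ℕ) = 2) ↔ π i ≠ σ i := by
  constructor
  · rintro ⟨j, hj⟩ he
    have := h i j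
    by_cases h1 : π i = j
    · rw [if_pos h1, if_pos (he ▸ h1)] at this; omega
    · rw [if_neg h1, if_neg (he ▸ h1)] at this; omega
  · intro he
    refine ⟨π i, ?_⟩
    rw [h i (π i), if_pos rfl, if_neg (fun hs => he hs.symm)]

end Agrees


section Main
variable {C : Fin n → Fin n → Fin 5} {π σ π₀ σ₀ : Equiv.Perm (Fin n)}

/-- column uniqueness: the row covering column `j` by `π` other than `i` is determined. -/
lemma other_row (hx : Agrees C π σ) (h0 : Agrees C π₀ σ₀) {i j : Fin n}
    (h2 : (C i j : ℕ) = 2) (hr : π.symm j ≠ i) (hr0 : π₀.symm j ≠ i) :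
    π.symm j = π₀.symm j := by
  by_contra hne
  have c1 : 2 ≤ (C (π.symm j) j : ℕ) := by
    have := hx (π.symm j) j
    rw [if_pos (π.apply_symm_apply j)] at this
    omega
  have c2 : 2 ≤ (C (π₀.symm j) j : ℕ) := by
    have := h0 (π₀.symm j) j
    rw [if_pos (π₀.apply_symm_apply j)] at this
    omega
  have := trip_le (f := fun i' => (C i' j : ℕ)) (Ne.symm hr) (Ne.symm hr0) hne (hx.colSum j)
  omega

lemma other_col (hx : Agrees C π σ) (h0 : Agrees C π₀ σ₀) {i j : Fin n}
    (h2 : (C i j : ℕ) = 2) (hc : π i ≠ j) (hc0 : π₀ i ≠ j) : π i = π₀ i := by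
  by_contra hne
  have c1 : 2 ≤ (C i (π i) : ℕ) := by
    have := hx i (π i); rw [if_pos rfl] at this; omega
  have c2 : 2 ≤ (C i (π₀ i) : ℕ) := by
    have := h0 i (π₀ i); rw [if_pos rfl] at this; omega
  have := trip_le (f := fun j' => (C i j' : ℕ)) (Ne.symm hc) (Ne.symm hc0) hne (hx.rowSum i)
  omega

lemma adj_of_two {i j : Fin n} (h2 : (C i j : ℕ) = 2) :
    (coverGraph C).Adj (Sum.inl i) (Sum.inr j) := by
  rw [coverGraph, SimpleGraph.fromRel_adj]
  exact ⟨by simp, Or.inl ⟨i, j, rfl, rfl, h2⟩⟩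

lemma comp_eq_of_two {i i' j : Fin n} (h2 : (C i j : ℕ) = 2) (h2' : (C i' j : ℕ) = 2) :
    (coverGraph C).connectedComponentMk (Sum.inl i)
      = (coverGraph C).connectedComponentMk (Sum.inl i') :=
  SimpleGraph.ConnectedComponent.sound
    ((adj_of_two h2).reachable.trans (adj_of_two h2').reachable.symm)

/-- The invariant used to read off the cycle-switching data from a pair of matchings. -/
def inv (π π₀ : Equiv.Perm (Fin n)) : Fin n ⊕ Fin n → Bool
  | Sum.inl i => decide (π i = π₀ i)
  | Sum.inr j => decide (π.symm j = π₀.symm j)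

lemma inv_adj (hx : Agrees C π σ) (h0 : Agrees C π₀ σ₀) :
    ∀ u v, (coverGraph C).Adj u v → inv π π₀ u = inv π π₀ v := by
  suffices key : ∀ i j, (C i j : ℕ) = 2 → ((π i = π₀ i) ↔ (π.symm j = π₀.symm j)) by
    intro u v h
    rw [coverGraph, SimpleGraph.fromRel_adj] at h
    obtain ⟨hne, h | h⟩ := h <;> obtain ⟨i, j, hu, hv, h2⟩ := h <;> subst hu <;> subst hv <;>
      simp only [inv, decide_eq_decide] <;> [skip; exact (key i j h2).symm]
    exact key i j h2
  intro i j h2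
  have hxij := hx i j
  have h0ij := h0 i j
  by_cases hp : π i = j
  · by_cases hp0 : π₀ i = j
    · refine iff_of_true (hp.trans hp0.symm) ?_
      have a1 : π.symm j = i := by rw [Equiv.symm_apply_eq]; exact hp.symm
      have a2 : π₀.symm j = i := by rw [Equiv.symm_apply_eq]; exact hp0.symm
      rw [a1, a2]
    · -- σ₀ i = j
      refine iff_of_false (fun he => hp0 (he ▸ hp)) (fun he => ?_)
      have h1 : π.symm j = i := by rw [Equiv.symm_apply_eq]; exact hp.symm
      have h2' : π₀ i = j := by
        have : π₀.symm j = i := he ▸ h1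
        rw [← this, π₀.apply_symm_apply]
      exact hp0 h2'
  · by_cases hp0 : π₀ i = j
    · refine iff_of_false (fun he => hp (he ▸ hp0)) (fun he => ?_)
      have h1 : π₀.symm j = i := by rw [Equiv.symm_apply_eq]; exact hp0.symm
      have : π.symm j = i := he ▸ h1
      exact hp (by rw [← this, π.apply_symm_apply])
    · have hr : π.symm j ≠ i := fun he => hp (by rw [← he, π.apply_symm_apply])
      have hr0 : π₀.symm j ≠ i := fun he => hp0 (by rw [← he, π₀.apply_symm_apply])
      exact iff_of_true (other_col hx h0 h2 hp hp0) (other_row hx h0 h2 hr hr0)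

lemma inv_reach {V : Type*} {G : SimpleGraph V} {f : V → Bool}
    (hf : ∀ u v, G.Adj u v → f u = f v) {u v : V} (h : G.Reachable u v) : f u = f v := by
  obtain ⟨p⟩ := h
  induction p with
  | nil => rfl
  | cons ha _ ih => exact (hf _ _ ha).trans ih


end Main

section Count
variable (C : Fin n → Fin n → Fin 5)

/-- The set of components of the cover graph that contain a doubly covered edge. -/
def FlagSet : Type _ := {comp : (coverGraph C).ConnectedComponent //
    ∃ i, (∃ j, (C i j : ℕ) = 2) ∧
      (coverGraph C).connectedComponentMk (Sum.inl i) = comp}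

lemma numCycles_eq : numCycles C = Nat.card (FlagSet C) := rfl

instance : Finite (FlagSet C) := by
  unfold FlagSet; infer_instance

noncomputable def flag (s : FlagSet C → Bool) (i : Fin n) : Bool :=
  if h : ∃ j, (C i j : ℕ) = 2 then
    s ⟨(coverGraph C).connectedComponentMk (Sum.inl i), i, h, rfl⟩
  else false

noncomputable def pfun (s : FlagSet C → Bool) (π₀ σ₀ : Equiv.Perm (Fin n)) : Fin n → Fin n :=
  fun i => if flag C s i then σ₀ i else π₀ i

variable {C} {π σ π₀ σ₀ : Equiv.Perm (Fin n)}

lemma pfun_inj (h0 : Agrees C π₀ σ₀) (s : FlagSet C → Bool) :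
    Function.Injective (pfun C s π₀ σ₀) := by
  have mixed : ∀ a b : Fin n, a ≠ b → flag C s a = false → flag C s b = true →
      π₀ a = σ₀ b → False := by
    intro a b hne fa fb he
    set j := π₀ a with hj
    have hCb : (C b j : ℕ) = 2 := by
      have h := h0 b j
      have hpb : π₀ b ≠ j := fun hh => hne (π₀.injective (hj ▸ hh)).symm
      rw [if_neg hpb, if_pos he.symm] at h
      omega
    have hCa : (C a j : ℕ) = 2 := by
      have h := h0 a j
      rw [if_pos hj.symm] at h
      by_cases hsa : σ₀ a = j
      · rw [if_pos hsa] at h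
        have := pair_le (f := fun i' => (C i' j : ℕ)) hne (h0.colSum j)
        omega
      · rw [if_neg hsa] at h; omega
    have hcomp := comp_eq_of_two hCa hCb
    have ha2 : ∃ j', (C a j' : ℕ) = 2 := ⟨j, hCa⟩
    have hb2 : ∃ j', (C b j' : ℕ) = 2 := ⟨j, hCb⟩
    rw [flag, dif_pos ha2] at fa
    rw [flag, dif_pos hb2] at fb
    have : (⟨(coverGraph C).connectedComponentMk (Sum.inl a), a, ha2, rfl⟩ : FlagSet C)
        = ⟨(coverGraph C).connectedComponentMk (Sum.inl b), b, hb2, rfl⟩ :=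
      Subtype.ext hcomp
    rw [this, fb] at fa
    exact Bool.false_ne_true fa.symm
  intro a b he
  by_contra hne
  unfold pfun at he
  by_cases fa : flag C s a = true <;> by_cases fb : flag C s b = true <;>
    simp only [fa, fb, if_true, if_false, Bool.not_eq_true] at he
  · exact hne (σ₀.injective he)
  · exact mixed b a (Ne.symm hne) (Bool.not_eq_true _ ▸ fb) fa he.symm
  · exact mixed a b hne (Bool.not_eq_true _ ▸ fa) fb he
  · exact hne (π₀.injective he)

noncomputable def fmap (h0 : Agrees C π₀ σ₀) (s : FlagSet C → Bool) :
    Equiv.Perm (Fin n) × Equiv.Perm (Fin n) :=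
  (Equiv.ofBijective _ (Finite.injective_iff_bijective.mp (pfun_inj h0 s)),
   Equiv.ofBijective _ (Finite.injective_iff_bijective.mp (pfun_inj h0.symm s)))

lemma fmap_fst_apply (h0 : Agrees C π₀ σ₀) (s : FlagSet C → Bool) (i : Fin n) :
    (fmap h0 s).1 i = pfun C s π₀ σ₀ i := rfl

lemma fmap_snd_apply (h0 : Agrees C π₀ σ₀) (s : FlagSet C → Bool) (i : Fin n) :
    (fmap h0 s).2 i = pfun C s σ₀ π₀ i := rfl

lemma fmap_agrees (h0 : Agrees C π₀ σ₀) (s : FlagSet C → Bool) :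
    Agrees C (fmap h0 s).1 (fmap h0 s).2 := by
  intro i j
  have h := h0 i j
  show (C i j : ℕ) =
    (if pfun C s π₀ σ₀ i = j then 2 else 0) + (if pfun C s σ₀ π₀ i = j then 2 else 0)
  unfold pfun
  by_cases hf : flag C s i = true
  · simp only [hf, if_true]
    omega
  · simp only [Bool.not_eq_true] at hf
    simp only [hf, Bool.false_eq_true, if_false]
    exact h

lemma fmap_inj (h0 : Agrees C π₀ σ₀) : Function.Injective (fmap h0) := by
  intro s₁ s₂ he
  funext c
  obtain ⟨comp, hc⟩ := c
  obtain ⟨i, h2, hcomp⟩ := hc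
  subst hcomp
  have hp : pfun C s₁ π₀ σ₀ i = pfun C s₂ π₀ σ₀ i := congrArg (fun x => x.1 i) he
  have hne : π₀ i ≠ σ₀ i := (h0.ne_iff i).mp h2
  unfold pfun at hp
  by_cases f1 : flag C s₁ i = true <;> by_cases f2 : flag C s₂ i = true <;>
    simp only [f1, f2, if_true, if_false, Bool.not_eq_true] at hp ⊢
  · -- both true
    have e1 := f1; have e2 := f2
    rw [flag, dif_pos h2] at e1 e2
    exact e1.trans e2.symm
  · exact absurd hp.symm hne
  · exact absurd hp hne
  · simp only [Bool.not_eq_true] at f1 f2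
    have e1 := f1; have e2 := f2
    rw [flag, dif_pos h2] at e1 e2
    exact e1.trans e2.symm

lemma fmap_surj (h0 : Agrees C π₀ σ₀) (x : Equiv.Perm (Fin n) × Equiv.Perm (Fin n))
    (hx : Agrees C x.1 x.2) : ∃ s, fmap h0 s = x := by
  obtain ⟨π, σ⟩ := x
  simp only at hx
  set s : FlagSet C → Bool := fun c => !(inv π π₀ (Sum.inl c.2.choose)) with hs
  have hconst : ∀ u v, (coverGraph C).Reachable u v → inv π π₀ u = inv π π₀ v :=
    fun u v h => inv_reach (inv_adj hx h0) h
  have hfl : ∀ i, (∃ j, (C i j : ℕ) = 2) → flag C s i = !(inv π π₀ (Sum.inl i)) := by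
    intro i h2
    rw [flag, dif_pos h2, hs]
    have hspec := (⟨(coverGraph C).connectedComponentMk (Sum.inl i), i, h2, rfl⟩ :
        FlagSet C).2.choose_spec
    have hr : (coverGraph C).Reachable
        (Sum.inl ((⟨(coverGraph C).connectedComponentMk (Sum.inl i), i, h2, rfl⟩ :
          FlagSet C).2.choose)) (Sum.inl i) :=
      SimpleGraph.ConnectedComponent.exact hspec.2
    simp only []
    rw [hconst _ _ hr]
  have key : ∀ i, pfun C s π₀ σ₀ i = π i ∧ pfun C s σ₀ π₀ i = σ i := by
    intro i
    by_cases h2 : ∃ j, (C i j : ℕ) = 2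
    · have hxne : π i ≠ σ i := (hx.ne_iff i).mp h2
      have h0ne : π₀ i ≠ σ₀ i := (h0.ne_iff i).mp h2
      have hCπ : (C i (π i) : ℕ) = 2 := by
        have := hx i (π i); rw [if_pos rfl, if_neg (fun h => hxne h.symm)] at this; omega
      have hCσ : (C i (σ i) : ℕ) = 2 := by
        have := hx i (σ i); rw [if_pos rfl, if_neg hxne] at this; omega
      have hCπ0 : (C i (π₀ i) : ℕ) = 2 := by
        have := h0 i (π₀ i); rw [if_pos rfl, if_neg (fun h => h0ne h.symm)] at this; omega
      unfold pfun
      rw [hfl i h2]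
      by_cases hpi : π i = π₀ i
      · have hinv : inv π π₀ (Sum.inl i) = true := by simp [inv, hpi]
        rw [hinv]
        simp only [Bool.not_true, Bool.false_eq_true, if_false]
        refine ⟨hpi.symm, ?_⟩
        -- σ₀ i = σ i
        have h := h0 i (σ i)
        rw [hCσ] at h
        have hn : π₀ i ≠ σ i := hpi ▸ hxne
        rw [if_neg hn] at h
        by_cases hq : σ₀ i = σ i
        · exact hq
        · rw [if_neg hq] at h; omega
      · have hinv : inv π π₀ (Sum.inl i) = false := by simp [inv, hpi]
        rw [hinv]
        simp only [Bool.not_false, if_true]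
        constructor
        · -- σ₀ i = π i
          have h := h0 i (π i)
          rw [hCπ, if_neg (fun h' => hpi h'.symm)] at h
          by_cases hq : σ₀ i = π i
          · exact hq
          · rw [if_neg hq] at h; omega
        · -- π₀ i = σ i
          have h := hx i (π₀ i)
          rw [hCπ0, if_neg hpi] at h
          by_cases hq : σ i = π₀ i
          · exact hq.symm
          · rw [if_neg hq] at h; omega
    · have f0 : flag C s i = false := by rw [flag, dif_neg h2]
      have hxeq : π i = σ i := not_ne_iff.mp fun hne => h2 ((hx.ne_iff i).mpr hne)
      have h0eq : π₀ i = σ₀ i := not_ne_iff.mp fun hne => h2 ((h0.ne_iff i).mpr hne)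
      have hCπ : (C i (π i) : ℕ) = 4 := by
        have := hx i (π i); rw [if_pos rfl, if_pos hxeq.symm] at this; omega
      have hCπ0 : (C i (π₀ i) : ℕ) = 4 := by
        have := h0 i (π₀ i); rw [if_pos rfl, if_pos h0eq.symm] at this; omega
      have hpi : π₀ i = π i := by
        by_contra hne
        have := pair_le (f := fun j' => (C i j' : ℕ)) (Ne.symm hne) (hx.rowSum i)
        omega
      unfold pfun
      rw [f0]
      simp only [Bool.false_eq_true, if_false]
      exact ⟨hpi, h0eq ▸ hxeq ▸ hpi⟩
  refine ⟨s, ?_⟩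
  have h1 : (fmap h0 s).1 = π := Equiv.ext fun i => (key i).1
  have h2 : (fmap h0 s).2 = σ := Equiv.ext fun i => (key i).2
  exact Prod.ext h1 h2

lemma card_agrees (C : Fin n → Fin n → Fin 5) {π₀ σ₀ : Equiv.Perm (Fin n)}
    (h0 : Agrees C π₀ σ₀) :
    (Finset.univ.filter fun x : Equiv.Perm (Fin n) × Equiv.Perm (Fin n) =>
      Agrees C x.1 x.2).card = 2 ^ numCycles C := by
  classical
  set T := Finset.univ.filter fun x : Equiv.Perm (Fin n) × Equiv.Perm (Fin n) =>
    Agrees C x.1 x.2 with hT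
  have hmem : ∀ s, fmap h0 s ∈ T := by
    intro s
    rw [hT, Finset.mem_filter]
    exact ⟨Finset.mem_univ _, fmap_agrees h0 s⟩
  have hbij : Function.Bijective (fun s : FlagSet C → Bool =>
      (⟨fmap h0 s, hmem s⟩ : {x // x ∈ T})) := by
    constructor
    · intro s₁ s₂ h
      exact fmap_inj h0 (congrArg Subtype.val h)
    · rintro ⟨x, hxT⟩
      rw [hT, Finset.mem_filter] at hxT
      obtain ⟨s, hs⟩ := fmap_surj h0 x hxT.2
      exact ⟨s, Subtype.ext hs⟩
  have hcard := Nat.card_eq_of_bijective _ hbij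
  rw [Nat.card_fun] at hcard
  have hBool : Nat.card Bool = 2 := by simp [Nat.card_eq_fintype_card]
  rw [hBool] at hcard
  have : Nat.card {x // x ∈ T} = T.card := by
    rw [Nat.card_eq_fintype_card, Fintype.card_coe]
  rw [this] at hcard
  rw [← hcard, numCycles_eq]


end Count

section Exists
variable {A : Matrix (Fin n) (Fin n) ℝ} {C : Fin n → Fin n → Fin 5}

lemma exists_agrees (hC : IsDoubleCycleCover A C) :
    ∃ π₀ σ₀ : Equiv.Perm (Fin n), Agrees C π₀ σ₀ := by
  classical
  obtain ⟨hvals, hsupp, hrow, hcol⟩ := hC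
  set r : Fin n → Finset (Fin n) := fun i => Finset.univ.filter fun j => 2 ≤ (C i j : ℕ)
    with hr
  have hall : ∀ s : Finset (Fin n), s.card ≤ (s.biUnion r).card := by
    intro s
    have h1 : ∀ i ∈ s, ∑ j ∈ s.biUnion r, (C i j : ℕ) = 4 := by
      intro i hi
      rw [← hrow i]
      apply Finset.sum_subset (Finset.subset_univ _)
      intro j _ hj
      have : j ∉ r i := fun hji => hj (Finset.mem_biUnion.mpr ⟨i, hi, hji⟩)
      rw [hr] at this
      simp only [Finset.mem_filter, Finset.mem_univ, true_and, not_le] at this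
      have hv := hvals i j
      omega
    have h2 : 4 * s.card = ∑ i ∈ s, ∑ j ∈ s.biUnion r, (C i j : ℕ) := by
      rw [Finset.sum_congr rfl h1, Finset.sum_const, smul_eq_mul, Nat.mul_comm]
    rw [Finset.sum_comm] at h2
    have h3 : ∀ j ∈ s.biUnion r, ∑ i ∈ s, (C i j : ℕ) ≤ 4 := by
      intro j _
      rw [← hcol j]
      exact Finset.sum_le_sum_of_subset (Finset.subset_univ _)
    have h4 : 4 * s.card ≤ 4 * (s.biUnion r).card := by
      rw [h2]
      calc ∑ j ∈ s.biUnion r, ∑ i ∈ s, (C i j : ℕ) ≤ ∑ _j ∈ s.biUnion r, 4 :=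
            Finset.sum_le_sum h3
        _ = 4 * (s.biUnion r).card := by rw [Finset.sum_const, smul_eq_mul, Nat.mul_comm]
    omega
  obtain ⟨f, finj, hf⟩ := (Finset.all_card_le_biUnion_card_iff_exists_injective r).mp hall
  have hπ2 : ∀ i, 2 ≤ (C i (f i) : ℕ) := by
    intro i
    have := hf i
    rw [hr] at this
    simpa using this
  set π₀ : Equiv.Perm (Fin n) := Equiv.ofBijective f (Finite.injective_iff_bijective.mp finj)
    with hπ₀
  have hπ₀a : ∀ i, π₀ i = f i := fun i => rfl
  set g : Fin n → Fin n := fun i =>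
    if h : ∃ j, j ≠ π₀ i ∧ (C i j : ℕ) = 2 then h.choose else π₀ i with hg
  have key : ∀ i j, (C i j : ℕ) = (if π₀ i = j then 2 else 0) + (if g i = j then 2 else 0) := by
    intro i j
    by_cases h4 : (C i (π₀ i) : ℕ) = 4
    · have hnex : ¬ ∃ j, j ≠ π₀ i ∧ (C i j : ℕ) = 2 := by
        rintro ⟨j', hne, h2⟩
        have := pair_le (f := fun j'' => (C i j'' : ℕ)) (Ne.symm hne) (hrow i)
        omega
      have hgi : g i = π₀ i := by rw [hg]; exact dif_neg hnex
      by_cases hj : π₀ i = j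
      · rw [if_pos hj, if_pos (hgi.trans hj)]
        rw [← hj]
        omega
      · rw [if_neg hj, if_neg fun h => hj (hgi ▸ h)]
        have := pair_le (f := fun j'' => (C i j'' : ℕ)) (a := π₀ i) (b := j) hj (hrow i)
        omega
    · have h2 : (C i (π₀ i) : ℕ) = 2 := by
        rcases hvals i (π₀ i) with h | h | h
        · have := hπ2 i; rw [hπ₀a] at h; omega
        · exact h
        · exact absurd h h4
      have hex : ∃ j, j ≠ π₀ i ∧ (C i j : ℕ) = 2 := by
        by_contra hne
        push_neg at hne
        have hz : ∑ j' ∈ ({π₀ i} : Finset (Fin n)), (C i j' : ℕ) = 4 := by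
          rw [← hrow i]
          apply Finset.sum_subset (Finset.subset_univ _)
          intro j' _ hj'
          simp only [Finset.mem_singleton] at hj'
          rcases hvals i j' with h | h | h
          · exact h
          · exact absurd h (hne j' hj')
          · have := pair_le (f := fun j'' => (C i j'' : ℕ)) (a := j') (b := π₀ i) hj' (hrow i)
            omega
        rw [Finset.sum_singleton] at hz
        omega
      have hgi : g i = hex.choose := by rw [hg]; exact dif_pos hex
      obtain ⟨hgne, hg2⟩ := hex.choose_spec
      rw [← hgi] at hgne hg2
      by_cases hj1 : π₀ i = j
      · rw [if_pos hj1, if_neg fun h => hgne (h.trans hj1.symm), ← hj1]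
        omega
      · rw [if_neg hj1]
        by_cases hj2 : g i = j
        · rw [if_pos hj2, ← hj2]
          omega
        · rw [if_neg hj2]
          have := trip_le (f := fun j'' => (C i j'' : ℕ)) (a := π₀ i) (b := g i) (c := j)
            (Ne.symm hgne) hj1 hj2 (hrow i)
          omega
  have ginj : Function.Injective g := by
    intro a b hgab
    by_contra hne
    set j := g a with hj
    have hCa : 2 ≤ (C a j : ℕ) := by have := key a j; rw [if_pos hj.symm] at this; omega
    have hCb : 2 ≤ (C b j : ℕ) := by
      have := key b j; rw [if_pos (hgab ▸ hj.symm : g b = j)] at this; omega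
    by_cases hpa : π₀ a = j
    · have : (C a j : ℕ) = 4 := by
        have := key a j; rw [if_pos hpa, if_pos hj.symm] at this; omega
      have := pair_le (f := fun i' => (C i' j : ℕ)) hne (hcol j)
      omega
    · by_cases hpb : π₀ b = j
      · have : (C b j : ℕ) = 4 := by
          have := key b j; rw [if_pos hpb, if_pos (hgab ▸ hj.symm : g b = j)] at this; omega
        have := pair_le (f := fun i' => (C i' j : ℕ)) hne (hcol j)
        omega
      · have hCr : 2 ≤ (C (π₀.symm j) j : ℕ) := by
          have := key (π₀.symm j) j
          rw [if_pos (π₀.apply_symm_apply j)] at this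
          omega
        have hra : π₀.symm j ≠ a := fun h => hpa (by rw [← h, π₀.apply_symm_apply])
        have hrb : π₀.symm j ≠ b := fun h => hpb (by rw [← h, π₀.apply_symm_apply])
        have := trip_le (f := fun i' => (C i' j : ℕ)) hne (Ne.symm hra) (Ne.symm hrb) (hcol j)
        omega
  exact ⟨π₀, Equiv.ofBijective g (Finite.injective_iff_bijective.mp ginj), key⟩


end Exists

section Phi

def phi (x : Equiv.Perm (Fin n) × Equiv.Perm (Fin n)) : Fin n → Fin n → Fin 5 :=
  fun i j =>
    if x.1 i = j then (if x.2 i = j then (4 : Fin 5) else 2) else (if x.2 i = j then 2 else 0)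

lemma phi_val (x : Equiv.Perm (Fin n) × Equiv.Perm (Fin n)) (i j : Fin n) :
    ((phi x i j : Fin 5) : ℕ) = (if x.1 i = j then 2 else 0) + (if x.2 i = j then 2 else 0) := by
  by_cases h1 : x.1 i = j <;> by_cases h2 : x.2 i = j <;> simp [phi, h1, h2] <;> rfl

lemma agrees_phi (x : Equiv.Perm (Fin n) × Equiv.Perm (Fin n)) : Agrees (phi x) x.1 x.2 :=
  fun i j => phi_val x i j

lemma phi_eq_iff {x : Equiv.Perm (Fin n) × Equiv.Perm (Fin n)} {C : Fin n → Fin n → Fin 5} :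
    phi x = C ↔ Agrees C x.1 x.2 := by
  constructor
  · intro h; exact h ▸ agrees_phi x
  · intro h
    funext i j
    exact Fin.val_injective ((agrees_phi x i j).trans (h i j).symm)

variable {A : Matrix (Fin n) (Fin n) ℝ}

lemma phi_isDCC (hA : ∀ i j, A i j = 0 ∨ A i j = 1)
    {x : Equiv.Perm (Fin n) × Equiv.Perm (Fin n)}
    (h1 : ∀ i, A i (x.1 i) ≠ 0) (h2 : ∀ i, A i (x.2 i) ≠ 0) :
    IsDoubleCycleCover A (phi x) := by
  refine ⟨fun i j => ?_, fun i j hz => ?_, (agrees_phi x).rowSum, (agrees_phi x).colSum⟩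
  · rw [phi_val]
    by_cases ha : x.1 i = j <;> by_cases hb : x.2 i = j <;> simp [ha, hb]
  · rw [phi_val]
    have ha : x.1 i ≠ j := fun h => h1 i (h ▸ hz)
    have hb : x.2 i ≠ j := fun h => h2 i (h ▸ hz)
    rw [if_neg ha, if_neg hb]

end Phi

theorem perm_sq (n : ℕ) (A : Matrix (Fin n) (Fin n) ℝ)
    (hA : ∀ i j, A i j = 0 ∨ A i j = 1) :
    permanent A ^ 2 =
      ∑ C : Fin n → Fin n → Fin 5,
        if IsDoubleCycleCover A C then (2 : ℝ) ^ numCycles C else 0 := by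
  classical
  have step1 : permanent A ^ 2 = ∑ x : Equiv.Perm (Fin n) × Equiv.Perm (Fin n),
      (∏ i, A i (x.1 i)) * (∏ i, A i (x.2 i)) := by
    rw [permanent, sq, Fintype.sum_mul_sum, ← Fintype.sum_prod_type']
  have step2 : ∀ x : Equiv.Perm (Fin n) × Equiv.Perm (Fin n),
      (∏ i, A i (x.1 i)) * (∏ i, A i (x.2 i)) =
        if (∀ i, A i (x.1 i) ≠ 0) ∧ (∀ i, A i (x.2 i) ≠ 0) then (1 : ℝ) else 0 := by
    intro x
    split_ifs with h
    · obtain ⟨h1, h2⟩ := h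
      rw [Finset.prod_eq_one fun i _ => (hA i (x.1 i)).resolve_left (h1 i),
        Finset.prod_eq_one fun i _ => (hA i (x.2 i)).resolve_left (h2 i), one_mul]
    · rcases not_and_or.mp h with h' | h'
      · obtain ⟨i, hi⟩ := not_forall.mp h'
        have hz : (∏ i, A i (x.1 i)) = 0 :=
          Finset.prod_eq_zero (Finset.mem_univ i) (not_not.mp hi)
        rw [hz, zero_mul]
      · obtain ⟨i, hi⟩ := not_forall.mp h'
        have hz : (∏ i, A i (x.2 i)) = 0 :=
          Finset.prod_eq_zero (Finset.mem_univ i) (not_not.mp hi)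
        rw [hz, mul_zero]
  rw [step1]
  simp_rw [step2]
  rw [Finset.sum_boole]
  set P := Finset.univ.filter fun x : Equiv.Perm (Fin n) × Equiv.Perm (Fin n) =>
    (∀ i, A i (x.1 i) ≠ 0) ∧ (∀ i, A i (x.2 i) ≠ 0) with hP
  have hfib : P.card = ∑ C : Fin n → Fin n → Fin 5,
      (P.filter fun x => phi x = C).card :=
    Finset.card_eq_sum_card_fiberwise fun x _ => Finset.mem_univ (phi x)
  rw [hfib]
  push_cast
  refine Finset.sum_congr rfl fun C _ => ?_
  by_cases hC : IsDoubleCycleCover A C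
  · rw [if_pos hC]
    have hfil : (P.filter fun x => phi x = C)
        = Finset.univ.filter fun x : Equiv.Perm (Fin n) × Equiv.Perm (Fin n) =>
            Agrees C x.1 x.2 := by
      ext x
      simp only [hP, Finset.mem_filter, Finset.mem_univ, true_and]
      constructor
      · rintro ⟨-, h⟩
        exact phi_eq_iff.mp h
      · intro h
        refine ⟨⟨fun i hz => ?_, fun i hz => ?_⟩, phi_eq_iff.mpr h⟩
        · have h0 := hC.2.1 i (x.1 i) hz
          have := h i (x.1 i)
          rw [if_pos rfl] at this
          omega
        · have h0 := hC.2.1 i (x.2 i) hz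
          have := h i (x.2 i)
          rw [if_pos rfl] at this
          omega
    obtain ⟨π₀, σ₀, h0⟩ := exists_agrees hC
    rw [hfil, card_agrees C h0]
    push_cast
    ring
  · rw [if_neg hC]
    have : (P.filter fun x => phi x = C) = ∅ := by
      rw [Finset.filter_eq_empty_iff]
      intro x hx
      rw [hP, Finset.mem_filter] at hx
      intro hphi
      exact hC (hphi ▸ phi_isDCC hA hx.2.1 hx.2.2)
    rw [this]
    simp


end PermSqAux

/-- For a `{0,1}` matrix `A`, `(perm A)² = Σ_{C ⊢ A} 2^{t(C)}`, the sum over all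
double cycle covers `C` of the bipartite graph of `A`, where `t(C)` is the number of
cycles of length `> 2` in `C`. -/
theorem perm_sq_eq_sum_double_cycle_covers (n : ℕ) (A : Matrix (Fin n) (Fin n) ℝ)
    (hA : ∀ i j, A i j = 0 ∨ A i j = 1) :
    permanent A ^ 2 =
      ∑ C : Fin n → Fin n → Fin 5,
        if IsDoubleCycleCover A C then (2 : ℝ) ^ numCycles C else 0 :=
  PermSqAux.perm_sq n A hA
end
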